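/- Let p be a prime, C the p×p cyclic permutation matrix, and D a unitary diagonal p×p matrix with det D = 1. For every integer k with 1 ≤ k ≤ p−1, the characteristic polynomial of D C^k is λ^p − 1; consequently the spectrum of D C^k is the set of all p-th roots of unity {1, θ, θ^2, …, θ^{p−1}}, where θ = e^{2πi/p}. -/

import Mathlib

open Matrix Polynomial

/-- The `p × p` cyclic permutation matrix. -/
def cycleMatrix (p : ℕ) : Matrix (Fin p) (Fin p) ℂ :=
  Matrix.of fun i j => if (j : ℕ) = ((i : ℕ) + 1) % p then 1 else 0

section Aux

variable {p : ℕ} [NeZero p]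

/-- The natural additive map `Fin p →+ ZMod p`. -/
def finZMod (p : ℕ) [NeZero p] : Fin p →+ ZMod p where
  toFun i := (i.1 : ZMod p)
  map_zero' := by simp
  map_add' a b := by simp [Fin.val_add, ZMod.natCast_mod]

lemma finZMod_injective : Function.Injective (finZMod p) := by
  intro a b h
  have h2 := congrArg ZMod.val h
  simpa [finZMod, ZMod.val_cast_of_lt a.isLt, ZMod.val_cast_of_lt b.isLt, Fin.ext_iff] using h2

omit [NeZero p] in
lemma cycleMatrix_pow_apply (hp0 : 0 < p) (m : ℕ) (i j : Fin p) :
    (cycleMatrix p ^ m) i j = if (j : ℕ) = ((i : ℕ) + m) % p then 1 else 0 := by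
  induction m generalizing j with
  | zero =>
      simp only [pow_zero, Matrix.one_apply, Nat.add_zero]
      by_cases h : i = j
      · subst h; simp [Nat.mod_eq_of_lt i.isLt]
      · rw [if_neg h, if_neg]
        rw [Nat.mod_eq_of_lt i.isLt]
        exact fun hh => h (Fin.ext hh.symm)
  | succ m ih =>
      rw [pow_succ, Matrix.mul_apply]
      rw [Finset.sum_eq_single (⟨((i : ℕ) + m) % p, Nat.mod_lt _ hp0⟩ : Fin p)]
      · rw [ih]
        simp only [cycleMatrix, Matrix.of_apply]
        have : (((i : ℕ) + m) % p + 1) % p = ((i : ℕ) + (m + 1)) % p := by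
          have := (Nat.mod_modEq ((i : ℕ) + m) p).add_right 1
          simpa [← add_assoc] using this
        simp [this]
      · intro b _ hb
        rw [ih]
        have : ¬ ((b : ℕ) = ((i : ℕ) + m) % p) := fun hh => hb (Fin.ext hh)
        simp [this]
      · simp

/-- Membership in the spectrum of a complex matrix is being a root of the charpoly. -/
lemma mem_spectrum_iff_charpoly_eval {n : Type*} [Fintype n] [DecidableEq n]
    (M : Matrix n n ℂ) (μ : ℂ) : μ ∈ spectrum ℂ M ↔ M.charpoly.eval μ = 0 := by
  rw [spectrum.mem_iff, Matrix.isUnit_iff_isUnit_det, isUnit_iff_ne_zero, not_not]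
  have hdet : (algebraMap ℂ (Matrix n n ℂ) μ - M).det = M.charpoly.eval μ := by
    rw [Matrix.charpoly, Polynomial.eval, ← Polynomial.coe_eval₂RingHom, RingHom.map_det]
    congr 1
    ext i j
    simp [Matrix.charmatrix_apply, Matrix.algebraMap_matrix_apply, Matrix.diagonal_apply,
      apply_ite]
  rw [hdet]

end Aux

theorem charpoly_and_spectrum_diagonal_mul_cycle_pow (p : ℕ) (hp : p.Prime)
    (d : Fin p → ℂ) (hd : ∀ i, ‖d i‖ = 1) (hdet : ∏ i, d i = 1)
    (k : ℕ) (hk1 : 1 ≤ k) (hk2 : k ≤ p - 1) :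
    (Matrix.diagonal d * cycleMatrix p ^ k).charpoly = X ^ p - 1 ∧
      spectrum ℂ (Matrix.diagonal d * cycleMatrix p ^ k) =
        Set.range (fun j : Fin p => Complex.exp (2 * Real.pi * Complex.I / p) ^ (j : ℕ)) := by
  haveI : NeZero p := ⟨hp.ne_zero⟩
  haveI : Fact p.Prime := ⟨hp⟩
  have hp0 : 0 < p := hp.pos
  have hklt : k < p := lt_of_le_of_lt hk2 (Nat.sub_lt hp0 one_pos)
  set kf : Fin p := ⟨k, hklt⟩ with hkf
  have hkfval : (kf : ℕ) = k := rfl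
  have hkf0 : kf ≠ 0 := by
    intro h
    have := congrArg Fin.val h
    simp only [hkfval, Fin.val_zero] at this
    omega
  have hknz : (k : ZMod p) ≠ 0 := by
    rw [Ne, ZMod.natCast_eq_zero_iff]
    intro h
    exact absurd (Nat.le_of_dvd (by omega) h) (by omega)
  have hgkf : finZMod p kf = (k : ZMod p) := rfl
  set A := Matrix.diagonal d * cycleMatrix p ^ k with hA
  set τ : Equiv.Perm (Fin p) := Equiv.addRight kf with hτ
  have hτapp : ∀ i, τ i = i + kf := fun i => rfl
  have hAapp : ∀ i j, A i j = if j = i + kf then d i else 0 := by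
    intro i j
    rw [hA, Matrix.diagonal_mul, cycleMatrix_pow_apply hp0]
    have hiff : (j = i + kf) ↔ ((j : ℕ) = ((i : ℕ) + k) % p) := by
      rw [Fin.ext_iff, Fin.val_add, hkfval]
    by_cases h : (j : ℕ) = ((i : ℕ) + k) % p
    · rw [if_pos h, if_pos (hiff.mpr h), mul_one]
    · rw [if_neg h, if_neg (fun hh => h (hiff.mp hh)), mul_zero]
  have hτfix : ∀ i : Fin p, τ i ≠ i := by
    intro i h
    exact hkf0 (by rwa [hτapp, add_eq_left] at h)
  set π := τ⁻¹ with hπ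
  have hπτ : ∀ i, π i + kf = i := by
    intro i
    have h2 : τ (τ⁻¹ i) = i := τ.apply_symm_apply i
    rwa [hτapp] at h2
  have hπfix : ∀ i, π i ≠ i := by
    intro i h
    have h2 : τ (τ⁻¹ i) = i := τ.apply_symm_apply i
    rw [h] at h2
    exact hτfix i h2
  -- the key combinatorial step
  have key : ∀ σ : Equiv.Perm (Fin p), (∀ i, σ i = i ∨ σ i = π i) → σ = 1 ∨ σ = π := by
    intro σ hσ
    set S := Finset.univ.filter (fun i => σ i ≠ i) with hS
    have hsum1 : ∑ i, finZMod p (σ i) = ∑ i, finZMod p i := Equiv.sum_comp σ (finZMod p)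
    have hsum2 : ∑ i, finZMod p (σ i)
        = ∑ i, (finZMod p i - if i ∈ S then (k : ZMod p) else 0) := by
      apply Finset.sum_congr rfl
      intro i _
      by_cases h : σ i = i
      · simp [h, hS]
      · have hπi : σ i = π i := (hσ i).resolve_left h
        have hadd : finZMod p (π i) + (k : ZMod p) = finZMod p i := by
          rw [← hgkf, ← map_add, hπτ i]
        have hmem : i ∈ S := by simp [hS, h]
        rw [hπi, if_pos hmem]
        exact eq_sub_of_add_eq hadd
    rw [hsum2, Finset.sum_sub_distrib] at hsum1
    have h3 : ∑ i : Fin p, (if i ∈ S then (k : ZMod p) else 0) = S.card • (k : ZMod p) := by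
      rw [Finset.sum_ite_mem, Finset.univ_inter, Finset.sum_const]
    rw [h3, sub_eq_self] at hsum1
    rw [nsmul_eq_mul] at hsum1
    have hcard0 : (S.card : ZMod p) = 0 := by
      rcases mul_eq_zero.mp hsum1 with h | h
      · exact h
      · exact absurd h hknz
    have hdvd : p ∣ S.card := (ZMod.natCast_eq_zero_iff _ _).mp hcard0
    have hle : S.card ≤ p := le_trans (Finset.card_le_univ S) (by simp)
    rcases lt_or_eq_of_le hle with hlt | heq
    · left
      have h0 : S = ∅ := Finset.card_eq_zero.mp (Nat.eq_zero_of_dvd_of_lt hdvd hlt)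
      refine Equiv.ext fun i => ?_
      by_contra h
      have hmem : i ∈ S := by simp [hS]; simpa using h
      rw [h0] at hmem
      exact absurd hmem (Finset.notMem_empty i)
    · right
      have huniv : S = Finset.univ := Finset.eq_univ_of_card S (by simp [heq])
      refine Equiv.ext fun i => ?_
      have hmem : i ∈ S := huniv ▸ Finset.mem_univ i
      have hne : σ i ≠ i := by simpa [hS] using hmem
      exact (hσ i).resolve_left hne
  -- powers of τ and cyclicity
  have hτpow : ∀ (m : ℕ) (i : Fin p), (τ ^ m) i = i + m • kf := by
    intro m
    induction m with
    | zero => intro i; simp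
    | succ m ih =>
        intro i
        have h1 : (τ ^ (m + 1)) i = (τ ^ m) (τ i) := by rw [pow_succ]; rfl
        rw [h1, ih, hτapp, succ_nsmul, ← add_assoc, add_assoc i, add_comm kf, ← add_assoc]
  have hcyc : τ.IsCycle := by
    refine ⟨0, by rw [hτapp, zero_add]; exact hkf0, ?_⟩
    intro y _
    refine ⟨(((finZMod p y) * (k : ZMod p)⁻¹).val : ℤ), ?_⟩
    rw [zpow_natCast, hτpow, zero_add]
    apply finZMod_injective
    rw [map_nsmul, hgkf, nsmul_eq_mul, ZMod.natCast_val, ZMod.cast_id, mul_assoc,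
      inv_mul_cancel₀ hknz, mul_one]
  have hsupp : τ.support = Finset.univ :=
    Finset.eq_univ_of_forall fun i => Equiv.Perm.mem_support.mpr (hτfix i)
  have hsignπ : Equiv.Perm.sign π = -(-1) ^ p := by
    rw [hπ, Equiv.Perm.sign_inv, hcyc.sign, hsupp, Finset.card_univ, Fintype.card_fin]
  -- the characteristic polynomial
  have hchar : A.charpoly = X ^ p - 1 := by
    rw [Matrix.charpoly, Matrix.det_apply]
    have hzero : ∀ σ ∈ (Finset.univ : Finset (Equiv.Perm (Fin p))),
        σ ∉ ({1, π} : Finset (Equiv.Perm (Fin p))) →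
        Equiv.Perm.sign σ • ∏ i, charmatrix A (σ i) i = 0 := by
      intro σ _ hσmem
      simp only [Finset.mem_insert, Finset.mem_singleton, not_or] at hσmem
      by_cases hall : ∀ i, σ i = i ∨ σ i = π i
      · rcases key σ hall with h | h
        · exact absurd h hσmem.1
        · exact absurd h hσmem.2
      · push_neg at hall
        obtain ⟨i, hi1, hi2⟩ := hall
        have hentry : charmatrix A (σ i) i = 0 := by
          rw [Matrix.charmatrix_apply]
          have hd1 : Matrix.diagonal (fun _ : Fin p => (X : ℂ[X])) (σ i) i = 0 :=
            Matrix.diagonal_apply_ne _ hi1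
          have hd2 : A (σ i) i = 0 := by
            rw [hAapp, if_neg]
            intro h
            apply hi2
            have hτσ : τ (σ i) = i := by rw [hτapp]; exact h.symm
            rw [hπ]
            exact (Equiv.Perm.eq_inv_iff_eq).mpr hτσ
          rw [hd1, hd2, map_zero, sub_zero]
        have hzp : ∏ x : Fin p, charmatrix A (σ x) x = 0 :=
          Finset.prod_eq_zero (Finset.mem_univ i) hentry
        rw [hzp, smul_zero]
    rw [← Finset.sum_subset (Finset.subset_univ ({1, π} : Finset (Equiv.Perm (Fin p)))) hzero]
    have hne1π : (1 : Equiv.Perm (Fin p)) ≠ π := by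
      intro h
      exact hπfix 0 (by rw [← h]; rfl)
    rw [Finset.sum_pair hne1π]
    have hterm1 : Equiv.Perm.sign (1 : Equiv.Perm (Fin p)) •
        ∏ i, charmatrix A ((1 : Equiv.Perm (Fin p)) i) i = X ^ p := by
      have hdiag : ∀ i : Fin p, charmatrix A i i = X := by
        intro i
        rw [Matrix.charmatrix_apply, Matrix.diagonal_apply_eq]
        have : A i i = 0 := by
          rw [hAapp, if_neg]
          intro h
          exact hkf0 (by rwa [left_eq_add] at h)
        rw [this, map_zero, sub_zero]
      simp only [Equiv.Perm.one_apply, hdiag, Finset.prod_const, Finset.card_univ,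
        Fintype.card_fin, Equiv.Perm.sign_one, one_smul]
    have htermπ : Equiv.Perm.sign π • ∏ i, charmatrix A (π i) i = -1 := by
      have hent : ∀ i : Fin p, charmatrix A (π i) i = -C (d (π i)) := by
        intro i
        rw [Matrix.charmatrix_apply, Matrix.diagonal_apply_ne _ (hπfix i), zero_sub]
        congr 1
        rw [hAapp, if_pos (hπτ i).symm]
      rw [Finset.prod_congr rfl fun i _ => hent i]
      have hprod : ∏ i : Fin p, -C (d (π i)) = ((-1) ^ p : ℂ[X]) := by
        have : ∀ i : Fin p, -C (d (π i)) = (-1) * C (d (π i)) := fun i => by ring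
        rw [Finset.prod_congr rfl fun i _ => this i, Finset.prod_mul_distrib,
          Finset.prod_const, Finset.card_univ, Fintype.card_fin, ← map_prod,
          Equiv.prod_comp π d, hdet, Polynomial.C_1, mul_one]
      rw [hprod, hsignπ, Units.smul_def]
      have hcoe : ((-(-1) ^ p : ℤˣ) : ℤ) = -(-1) ^ p := by push_cast; ring
      rw [hcoe, zsmul_eq_mul]
      push_cast
      rw [neg_mul, ← pow_add, ← two_mul, pow_mul]
      norm_num
    rw [hterm1, htermπ, ← sub_eq_add_neg]
  refine ⟨hchar, ?_⟩
  -- spectrum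
  have hθ : IsPrimitiveRoot (Complex.exp (2 * Real.pi * Complex.I / p)) p :=
    Complex.isPrimitiveRoot_exp p hp.ne_zero
  ext z
  rw [mem_spectrum_iff_charpoly_eval, hchar]
  simp only [eval_sub, eval_pow, eval_X, eval_one, sub_eq_zero]
  constructor
  · intro hz
    obtain ⟨i, hi, hpow⟩ := hθ.eq_pow_of_pow_eq_one hz
    exact ⟨⟨i, hi⟩, hpow⟩
  · rintro ⟨j, rfl⟩
    rw [← pow_mul, mul_comm (j : ℕ) p, pow_mul, hθ.pow_eq_one, one_pow]
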